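/- Let n ≥ 1 and r ≥ 0 be integers, and for each i ∈ {1,…,n} let R_i ⊆ {1,…,n}\{i} be a set with |R_i| ≤ r. Then there exists a permutation π of {1,…,n} and a subset T ⊆ {1,…,n} with |T| ≥ n/(r+1) such that for every i ∈ T and every j ∈ R_i, j appears before i in the ordering given by π (i.e., π⁻¹(j) < π⁻¹(i)). -/

import Mathlib

private lemma aux16 {n r : ℕ} (R : Fin n → Finset (Fin n))
    (hR : ∀ i, i ∉ R i ∧ (R i).card ≤ r) (A : Finset (Fin n)) :
    ∃ l : List (Fin n), l.Nodup ∧ l.toFinset = A ∧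
      ∃ T : Finset (Fin n), T ⊆ A ∧ A.card ≤ (r + 1) * T.card ∧
        ∀ i ∈ T, ∀ j ∈ R i, j ∈ A → l.idxOf j < l.idxOf i := by
  induction A using Finset.strongInduction with
  | _ A ih =>
    rcases A.eq_empty_or_nonempty with rfl | ⟨i, hi⟩
    · exact ⟨[], List.nodup_nil, rfl, ∅, Finset.Subset.refl _, by simp, by simp⟩
    · set S : Finset (Fin n) := insert i (R i ∩ A) with hS
      have hSA : S ⊆ A := by
        intro x hx
        rcases Finset.mem_insert.mp hx with h | hx
        · subst h; exact hi
        · exact (Finset.mem_inter.mp hx).2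
      set A' : Finset (Fin n) := A \ S with hA'
      have hiS : i ∈ S := Finset.mem_insert_self _ _
      have hA'ss : A' ⊂ A := by
        refine Finset.ssubset_iff_of_subset (Finset.sdiff_subset) |>.mpr ⟨i, hi, ?_⟩
        simp [hA', hiS]
      obtain ⟨l', hnd', htf', T', hT'A', hcard', hgood'⟩ := ih A' hA'ss
      set m : List (Fin n) := (R i ∩ A).toList with hm
      set s : List (Fin n) := m ++ [i] with hs
      have hiRm : i ∉ m := by
        simp only [hm, Finset.mem_toList, Finset.mem_inter]
        exact fun h => (hR i).1 h.1
      have hsnd : s.Nodup := by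
        rw [hs, List.nodup_append]
        refine ⟨Finset.nodup_toList _, List.nodup_singleton _, ?_⟩
        intro a ha b hb hab
        subst hab
        exact hiRm (List.mem_singleton.mp hb ▸ ha)
      have hstf : s.toFinset = S := by
        rw [hs, hm, List.toFinset_append, Finset.toList_toFinset]
        simp only [List.toFinset_cons, List.toFinset_nil, insert_empty_eq, hS]
        rw [Finset.union_comm, ← Finset.insert_eq]
      have hmem_s : ∀ x, x ∈ s ↔ x ∈ S := by
        intro x; rw [← hstf]; simp
      refine ⟨s ++ l', ?_, ?_, insert i T', ?_, ?_, ?_⟩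
      · rw [List.nodup_append]
        refine ⟨hsnd, hnd', fun a ha _ h hab => ?_⟩
        subst hab
        have haS : a ∈ S := (hmem_s a).1 ha
        have haA' : a ∈ A' := htf' ▸ List.mem_toFinset.mpr h
        exact (Finset.mem_sdiff.mp haA').2 haS
      · rw [List.toFinset_append, hstf, htf', hA']
        rw [Finset.union_sdiff_of_subset hSA]
      · intro x hx
        rcases Finset.mem_insert.mp hx with h | hx
        · subst h; exact hi
        · exact Finset.sdiff_subset (hT'A' hx)
      · have hiT' : i ∉ T' := fun h => by
          have := hT'A' h
          exact (Finset.mem_sdiff.mp this).2 hiS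
        rw [Finset.card_insert_of_notMem hiT']
        have hSle : S.card ≤ A.card := Finset.card_le_card hSA
        have h1 : A.card = S.card + A'.card := by
          rw [hA', Finset.card_sdiff_of_subset hSA]
          omega
        have hScard : S.card ≤ r + 1 := by
          calc S.card ≤ (R i ∩ A).card + 1 := Finset.card_insert_le _ _
            _ ≤ r + 1 := by
              have h3 : (R i ∩ A).card ≤ (R i).card := Finset.card_le_card Finset.inter_subset_left
              have h4 := (hR i).2
              omega
        calc A.card = S.card + A'.card := by omega
          _ ≤ (r + 1) + (r + 1) * T'.card := by omega
          _ = (r + 1) * (T'.card + 1) := by ring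
      · intro x hx j hj hjA
        have hslen : s.idxOf i = m.length := by
          rw [hs, List.idxOf_append_of_notMem hiRm]
          simp
        rcases Finset.mem_insert.mp hx with h | hx
        · -- x = i
          subst h
          have hjm : j ∈ m := by
            simp [hm, Finset.mem_toList, Finset.mem_inter, hj, hjA]
          have hjs : j ∈ s := by rw [hs]; exact List.mem_append_left _ hjm
          have his : x ∈ s := (hmem_s x).2 hiS
          rw [List.idxOf_append_of_mem hjs, List.idxOf_append_of_mem his, hslen,
            hs, List.idxOf_append_of_mem hjm]
          exact List.idxOf_lt_length_iff.mpr hjm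
        · -- x ∈ T'
          have hxA' : x ∈ A' := hT'A' hx
          have hxs : x ∉ s := fun h => (Finset.mem_sdiff.mp hxA').2 ((hmem_s x).1 h)
          rw [List.idxOf_append_of_notMem hxs]
          by_cases hjs : j ∈ s
          · rw [List.idxOf_append_of_mem hjs]
            calc s.idxOf j < s.length := List.idxOf_lt_length_iff.mpr hjs
              _ ≤ s.length + l'.idxOf x := Nat.le_add_right _ _
          · rw [List.idxOf_append_of_notMem hjs]
            have hjA' : j ∈ A' := by
              rw [hA', Finset.mem_sdiff]
              exact ⟨hjA, fun h => hjs ((hmem_s j).2 h)⟩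
            exact Nat.add_lt_add_left (hgood' x hx j hj hjA') _

/-- given, for each `i ∈ {1,…,n}`, a set `R_i ⊆ {1,…,n}\{i}` with
`|R_i| ≤ r`, there are a permutation `π` of the coordinates and a set `T` with
`|T| ≥ n/(r+1)` such that every `i ∈ T` is preceded (in the order given by `π`) by all
elements of `R_i`. -/
theorem stmt_16 {n r : ℕ} (hn : 1 ≤ n) (R : Fin n → Finset (Fin n))
    (hR : ∀ i, i ∉ R i ∧ (R i).card ≤ r) :
    ∃ (π : Equiv.Perm (Fin n)) (T : Finset (Fin n)),
      (n : ℝ) / ((r : ℝ) + 1) ≤ (T.card : ℝ) ∧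
      ∀ i ∈ T, ∀ j ∈ R i, π.symm j < π.symm i := by
  obtain ⟨l, hnd, htf, T, hTA, hcard, hgood⟩ := aux16 R hR Finset.univ
  have hlen : l.length = n := by
    have h := List.toFinset_card_of_nodup hnd
    rw [htf, Finset.card_univ, Fintype.card_fin] at h
    exact h.symm
  have hmem : ∀ x : Fin n, x ∈ l := fun x => by
    rw [← List.mem_toFinset, htf]; exact Finset.mem_univ x
  have hlt : ∀ x : Fin n, l.idxOf x < n := fun x => by
    exact lt_of_lt_of_le (List.idxOf_lt_length_iff.mpr (hmem x)) (le_of_eq hlen)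
  set g : Fin n → Fin n := fun x => ⟨l.idxOf x, hlt x⟩ with hg
  have hginj : Function.Injective g := by
    intro a b hab
    have : l.idxOf a = l.idxOf b := congrArg Fin.val hab
    exact (List.idxOf_inj (hmem a)).mp this
  have hgbij : Function.Bijective g := Finite.injective_iff_bijective.mp hginj
  refine ⟨(Equiv.ofBijective g hgbij).symm, T, ?_, ?_⟩
  · rw [div_le_iff₀ (by positivity)]
    have : (n : ℝ) ≤ ((r + 1) * T.card : ℕ) := by
      exact_mod_cast le_trans (by simp [Finset.card_univ] : n ≤ Finset.univ.card) hcard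
    push_cast at this ⊢
    linarith
  · intro i hi j hj
    have := hgood i hi j hj (Finset.mem_univ j)
    simpa [Equiv.symm_symm, Equiv.ofBijective, hg, Fin.lt_def] using this
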